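/- Let k be an algebraically closed field and let g, h ∈ k[x,y,z] be nonzero polynomials in three variables having no common nonunit factor. Then for all but finitely many λ ∈ k, the set {(β,γ) ∈ k × k : g(λ,β,γ) = 0 and h(λ,β,γ) = 0} is finite. (Claim in the proof of Lemma 3.3.4) -/

import Mathlib

open Polynomial nonZeroDivisors
open MvPolynomial

lemma my_elim {R : Type*} [CommRing R] [IsDomain R] [NormalizedGCDMonoid R]
    (G H : Polynomial R) (hG : G ≠ 0) (hH : H ≠ 0)
    (hcop : ∀ d, d ∣ G → d ∣ H → IsUnit d) :
    ∃ A B : Polynomial R, ∃ c : R, c ≠ 0 ∧ A * G + B * H = Polynomial.C c := by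
  classical
  set K := FractionRing R with hK
  set φ : R →+* K := algebraMap R K with hφ
  have hφinj : Function.Injective φ := IsFractionRing.injective R K
  have hGm : G.map φ ≠ 0 := (Polynomial.map_ne_zero_iff hφinj).mpr hG
  have hHm : H.map φ ≠ 0 := (Polynomial.map_ne_zero_iff hφinj).mpr hH
  have smul_eq : ∀ (s : R) (p : K[X]), s • p = Polynomial.C (φ s) * p := by
    intro s p
    rw [Algebra.smul_def]
    congr 1
  have key : IsCoprime (G.map φ) (H.map φ) := by
    rw [← EuclideanDomain.gcd_isUnit_iff]
    by_contra hU
    set d := EuclideanDomain.gcd (G.map φ) (H.map φ) with hd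
    have hdG : d ∣ G.map φ := EuclideanDomain.gcd_dvd_left _ _
    have hdH : d ∣ H.map φ := EuclideanDomain.gcd_dvd_right _ _
    have hd0 : d ≠ 0 := fun h => hGm (by simpa [h, zero_dvd_iff] using hdG)
    obtain ⟨p, hp_irr, hpd⟩ := WfDvdMonoid.exists_irreducible_factor hU hd0
    have hpG : p ∣ G.map φ := hpd.trans hdG
    have hpH : p ∣ H.map φ := hpd.trans hdH
    have hp0 : p ≠ 0 := hp_irr.ne_zero
    obtain ⟨⟨s, hs⟩, hmap⟩ := IsLocalization.integerNormalization_map_to_map R⁰ p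
    set N := IsLocalization.integerNormalization R⁰ p with hN
    have hs0 : φ s ≠ 0 := fun h =>
      (mem_nonZeroDivisors_iff_ne_zero.mp hs) (hφinj (h.trans (map_zero φ).symm))
    have hsmul : N.map φ = Polynomial.C (φ s) * p := by
      rw [hmap, smul_eq]
    have hN0 : N ≠ 0 := by
      intro h
      rw [h, Polynomial.map_zero] at hsmul
      exact hp0 (by simpa [hs0] using hsmul.symm)
    set P := N.primPart with hP
    have hPprim : P.IsPrimitive := N.isPrimitive_primPart
    have hc0 : φ N.content ≠ 0 := fun h => hN0 (Polynomial.content_eq_zero_iff.mp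
      (hφinj (h.trans (map_zero φ).symm)))
    have h1 : Polynomial.C (φ N.content) * P.map φ = Polynomial.C (φ s) * p := by
      rw [← hsmul]
      conv_lhs => rw [← Polynomial.map_C]
      rw [← Polynomial.map_mul, ← N.eq_C_content_mul_primPart]
    have hassoc : Associated (P.map φ) p := by
      have a1 : Associated (P.map φ) (Polynomial.C (φ N.content) * P.map φ) :=
        (associated_unit_mul_left _ _ (Polynomial.isUnit_C.mpr (isUnit_iff_ne_zero.mpr hc0))).symm
      have a2 : Associated (Polynomial.C (φ N.content) * P.map φ) p := by
        rw [h1]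
        exact associated_unit_mul_left _ _ (Polynomial.isUnit_C.mpr (isUnit_iff_ne_zero.mpr hs0))
      exact a1.trans a2
    -- P divides G and H
    have hdvd : ∀ Q : R[X], Q ≠ 0 → p ∣ Q.map φ → P ∣ Q := by
      intro Q hQ0 hpQ
      have hcQ : φ Q.content ≠ 0 := fun h => hQ0 (Polynomial.content_eq_zero_iff.mp
        (hφinj (h.trans (map_zero φ).symm)))
      have h2 : Q.map φ = Polynomial.C (φ Q.content) * Q.primPart.map φ := by
        conv_lhs => rw [Q.eq_C_content_mul_primPart]
        rw [Polynomial.map_mul, Polynomial.map_C]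
      have hPQ : P.map φ ∣ Q.primPart.map φ := by
        have : p ∣ Q.primPart.map φ := by
          have ha : Associated (Q.map φ) (Q.primPart.map φ) := by
            rw [h2]
            exact associated_unit_mul_left _ _ (Polynomial.isUnit_C.mpr (isUnit_iff_ne_zero.mpr hcQ))
          exact ha.dvd_iff_dvd_right.mp hpQ
        exact hassoc.dvd_iff_dvd_left.mpr this
      exact (hPprim.dvd_of_fraction_map_dvd_fraction_map hPQ).trans
        Q.primPart_dvd
    have hPunit : IsUnit P := hcop P (hdvd G hG hpG) (hdvd H hH hpH)
    exact hp_irr.not_isUnit (hassoc.isUnit (hPunit.map (Polynomial.mapRingHom φ)))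
  obtain ⟨a, b, hab⟩ := key
  obtain ⟨⟨sa, hsa⟩, ha⟩ := IsLocalization.integerNormalization_map_to_map R⁰ a
  obtain ⟨⟨sb, hsb⟩, hb⟩ := IsLocalization.integerNormalization_map_to_map R⁰ b
  refine ⟨Polynomial.C sb * IsLocalization.integerNormalization R⁰ a,
    Polynomial.C sa * IsLocalization.integerNormalization R⁰ b, sa * sb, ?_, ?_⟩
  · exact mul_ne_zero (mem_nonZeroDivisors_iff_ne_zero.mp hsa)
      (mem_nonZeroDivisors_iff_ne_zero.mp hsb)
  · apply Polynomial.map_injective φ hφinj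
    rw [Polynomial.map_add, Polynomial.map_mul, Polynomial.map_mul, Polynomial.map_mul,
      Polynomial.map_mul, ha, hb, Polynomial.map_C, Polynomial.map_C, Polynomial.map_C,
      smul_eq, smul_eq]
    have h2 : (Polynomial.C (φ sa) * Polynomial.C (φ sb)) * (a * G.map φ + b * H.map φ)
        = Polynomial.C (φ sa) * Polynomial.C (φ sb) := by rw [hab, mul_one]
    rw [map_mul, Polynomial.C_mul, ← h2]
    ring

lemma my_fin1 {k : Type*} [Field k] {c : MvPolynomial (Fin 1) k} (hc : c ≠ 0) :
    {a : k | MvPolynomial.eval ![a] c = 0}.Finite := by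
  classical
  set q := MvPolynomial.finSuccEquiv k 0 c with hq
  have hq0 : q ≠ 0 := fun h => hc ((map_eq_zero_iff _ (MvPolynomial.finSuccEquiv k 0).injective).mp h)
  set s : Fin 0 → k := fun i => i.elim0 with hs
  have hinj : Function.Injective ⇑(MvPolynomial.eval s) := by
    intro p p' h
    obtain ⟨r, rfl⟩ := MvPolynomial.C_surjective (Fin 0) p
    obtain ⟨r', rfl⟩ := MvPolynomial.C_surjective (Fin 0) p'
    simpa using h
  have hmap0 : q.map (MvPolynomial.eval s) ≠ 0 :=
    fun h => hq0 (Polynomial.map_injective _ hinj (by simpa using h))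
  have heq : ∀ a : k, MvPolynomial.eval ![a] c
      = Polynomial.eval a (q.map (MvPolynomial.eval s)) := by
    intro a
    have h1 : (![a] : Fin 1 → k) = Fin.cons a s := by
      funext i
      refine Fin.cases rfl (fun j => j.elim0) i
    rw [h1, MvPolynomial.eval_eq_eval_mv_eval']
  simp only [heq]
  exact Polynomial.finite_setOf_isRoot hmap0

lemma my_fin2 {k : Type*} [Field k] {c : MvPolynomial (Fin 2) k} (hc : c ≠ 0) :
    {a : k | ¬ {t : k | MvPolynomial.eval ![t, a] c = 0}.Finite}.Finite := by
  classical
  set q := MvPolynomial.finSuccEquiv k 1 c with hq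
  have hq0 : q ≠ 0 := fun h => hc ((map_eq_zero_iff _ (MvPolynomial.finSuccEquiv k 1).injective).mp h)
  have hex : ∃ n, q.coeff n ≠ 0 := by
    by_contra hcon
    push_neg at hcon
    exact hq0 (Polynomial.ext fun n => by simp [hcon n])
  obtain ⟨n, hn⟩ := hex
  refine (my_fin1 hn).subset ?_
  intro a ha
  simp only [Set.mem_setOf_eq] at ha ⊢
  by_contra hne
  apply ha
  have hmap0 : q.map (MvPolynomial.eval ![a]) ≠ 0 := by
    intro h
    apply hne
    have := congrArg (fun p => Polynomial.coeff p n) h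
    simpa using this
  have heq : ∀ t : k, MvPolynomial.eval ![t, a] c
      = Polynomial.eval t (q.map (MvPolynomial.eval ![a])) := by
    intro t
    have h1 : (![t, a] : Fin 2 → k) = Fin.cons t ![a] := by
      funext i
      refine Fin.cases rfl (fun j => Fin.cases rfl (fun j' => j'.elim0) j) i
    rw [h1, MvPolynomial.eval_eq_eval_mv_eval']
  simp only [heq]
  exact Polynomial.finite_setOf_isRoot hmap0

lemma my_eval_perm {k : Type*} [Field k] (σ : Equiv.Perm (Fin 3)) (f : MvPolynomial (Fin 3) k)
    (v : Fin 3 → k) :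
    MvPolynomial.eval v f = Polynomial.eval (v (σ.symm 0))
      (Polynomial.map (MvPolynomial.eval (fun i : Fin 2 => v (σ.symm i.succ)))
        (MvPolynomial.finSuccEquiv k 2 (MvPolynomial.rename σ f))) := by
  rw [← MvPolynomial.eval_eq_eval_mv_eval']
  rw [MvPolynomial.eval_rename]
  have hvec : ((Fin.cons (v (σ.symm 0)) fun i => v (σ.symm i.succ)) : Fin 3 → k)
      = fun j => v (σ.symm j) := by
    funext j
    refine Fin.cases rfl (fun j' => rfl) j
  rw [hvec]
  have hvc : (((fun j => v (σ.symm j)) ∘ ⇑σ) : Fin 3 → k) = v := by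
    funext i
    simp
  rw [hvc]

lemma my_exists_elim {k : Type*} [Field k] (σ : Equiv.Perm (Fin 3))
    (g h : MvPolynomial (Fin 3) k) (hg : g ≠ 0) (hh : h ≠ 0)
    (hcop : ∀ d : MvPolynomial (Fin 3) k, d ∣ g → d ∣ h → IsUnit d) :
    ∃ c : MvPolynomial (Fin 2) k, c ≠ 0 ∧ ∀ v : Fin 3 → k,
      MvPolynomial.eval v g = 0 → MvPolynomial.eval v h = 0 →
      MvPolynomial.eval (fun i : Fin 2 => v (σ.symm i.succ)) c = 0 := by
  classical
  letI : NormalizationMonoid (MvPolynomial (Fin 2) k) :=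
    UniqueFactorizationMonoid.normalizationMonoid.toNormalizationMonoid
  letI : NormalizedGCDMonoid (MvPolynomial (Fin 2) k) :=
    UniqueFactorizationMonoid.toNormalizedGCDMonoid _
  set E := (MvPolynomial.renameEquiv k σ).trans (MvPolynomial.finSuccEquiv k 2) with hE
  have hG : E g ≠ 0 := fun h0 => hg ((map_eq_zero_iff _ E.injective).mp h0)
  have hH : E h ≠ 0 := fun h0 => hh ((map_eq_zero_iff _ E.injective).mp h0)
  have hcop' : ∀ d, d ∣ E g → d ∣ E h → IsUnit d := by
    intro d hd1 hd2
    have h1 : E.symm d ∣ g := by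
      have := map_dvd E.symm hd1
      simpa using this
    have h2 : E.symm d ∣ h := by
      have := map_dvd E.symm hd2
      simpa using this
    have := (hcop _ h1 h2).map E
    simpa using this
  obtain ⟨A, B, c, hc0, hABc⟩ := my_elim (E g) (E h) hG hH hcop'
  refine ⟨c, hc0, ?_⟩
  intro v hgv hhv
  have hEg : E g = MvPolynomial.finSuccEquiv k 2 (MvPolynomial.rename σ g) := rfl
  have hEh : E h = MvPolynomial.finSuccEquiv k 2 (MvPolynomial.rename σ h) := rfl
  have key := congrArg (fun P : Polynomial (MvPolynomial (Fin 2) k) =>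
    Polynomial.eval (v (σ.symm 0))
      (P.map (MvPolynomial.eval (fun i : Fin 2 => v (σ.symm i.succ))))) hABc
  simp only [Polynomial.map_add, Polynomial.map_mul, Polynomial.eval_add, Polynomial.eval_mul,
    Polynomial.map_C, Polynomial.eval_C, hEg, hEh] at key
  rw [← my_eval_perm σ g v, ← my_eval_perm σ h v, hgv, hhv] at key
  simpa using key.symm

theorem common_zero_set_finite_of_coprime (k : Type*) [Field k] [IsAlgClosed k]
    (g h : MvPolynomial (Fin 3) k) (hg : g ≠ 0) (hh : h ≠ 0)
    (hcop : ∀ d : MvPolynomial (Fin 3) k, d ∣ g → d ∣ h → IsUnit d) :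
    {a : k | ¬ {p : k × k |
        eval ![a, p.1, p.2] g = 0 ∧ eval ![a, p.1, p.2] h = 0}.Finite}.Finite := by
  classical
  obtain ⟨c₂, hc₂0, hc₂⟩ := my_exists_elim (Equiv.swap 0 2) g h hg hh hcop
  obtain ⟨c₁, hc₁0, hc₁⟩ := my_exists_elim (Equiv.swap 0 1) g h hg hh hcop
  set c₁' := MvPolynomial.rename (Equiv.swap (0 : Fin 2) 1) c₁ with hc₁'def
  have hc₁'0 : c₁' ≠ 0 := fun h0 => hc₁0
    ((map_eq_zero_iff _ (MvPolynomial.rename_injective _ (Equiv.swap (0 : Fin 2) 1).injective)).mp h0)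
  refine ((my_fin2 hc₂0).union (my_fin2 hc₁'0)).subset ?_
  intro a ha
  simp only [Set.mem_setOf_eq] at ha
  by_contra hmem
  apply ha
  simp only [Set.mem_union, Set.mem_setOf_eq, not_or] at hmem
  push_neg at hmem
  obtain ⟨h2fin, h1fin⟩ := hmem
  refine ((h2fin.prod h1fin).subset ?_)
  rintro ⟨β, γ⟩ ⟨hgz, hhz⟩
  have e2 := hc₂ ![a, β, γ] hgz hhz
  have e1 := hc₁ ![a, β, γ] hgz hhz
  have hv2 : (fun i : Fin 2 => (![a, β, γ] : Fin 3 → k) ((Equiv.swap (0:Fin 3) 2).symm i.succ))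
      = ![β, a] := by
    funext i
    fin_cases i <;> simp [Equiv.swap_apply_def]
  have hv1 : (fun i : Fin 2 => (![a, β, γ] : Fin 3 → k) ((Equiv.swap (0:Fin 3) 1).symm i.succ))
      = ![a, γ] := by
    funext i
    fin_cases i <;> simp [Equiv.swap_apply_def]
  rw [hv2] at e2
  rw [hv1] at e1
  have e1' : MvPolynomial.eval ![γ, a] c₁' = 0 := by
    rw [hc₁'def, MvPolynomial.eval_rename]
    have : ((![γ, a] : Fin 2 → k) ∘ (Equiv.swap (0 : Fin 2) 1)) = ![a, γ] := by
      funext i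
      fin_cases i <;> simp [Equiv.swap_apply_def]
    rw [this, e1]
  exact ⟨e2, e1'⟩
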